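/- Let M be a matroid on E, K ⊆ E, and i ≠ j elements of E \ K. If no circuit of M contained in {i,j} ∪ K contains i or j (equivalently, i and j are coloops of the restriction M|({i,j}∪K)), then i ⊥ j | K. -/

import Mathlib

open Finset

/-- A matroid on a finite ground set `E`, given by its rank function. -/
structure FinMatroid (α : Type*) [DecidableEq α] where
  E : Finset α
  r : Finset α → ℕ
  r_empty : r ∅ = 0
  r_le_card : ∀ ⦃A⦄, A ⊆ E → r A ≤ A.card
  r_mono : ∀ ⦃A B : Finset α⦄, A ⊆ B → B ⊆ E → r A ≤ r B
  r_submod : ∀ ⦃A B : Finset α⦄, A ⊆ E → B ⊆ E → r (A ∪ B) + r (A ∩ B) ≤ r A + r B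

namespace FinMatroid

variable {α : Type*} [DecidableEq α]

/-- A set is independent if it is subcardinal-tight for the rank function. -/
def Indep (M : FinMatroid α) (S : Finset α) : Prop := S ⊆ M.E ∧ M.r S = S.card

/-- A circuit is a minimal dependent set. -/
def Circuit (M : FinMatroid α) (C : Finset α) : Prop :=
  C ⊆ M.E ∧ M.r C < C.card ∧ ∀ S, S ⊂ C → M.r S = S.card

/-- `B` is a basis of `S` if it is a maximal independent subset of `S`. -/
def BasisOf (M : FinMatroid α) (B S : Finset α) : Prop :=
  B ⊆ S ∧ M.Indep B ∧ ∀ x ∈ S, x ∉ B → ¬ M.Indep (insert x B)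

/-- The conditional independence statement `(ij|K)` holds in `M`:
`r(iK) + r(jK) = r(ijK) + r(K)`. -/
def CI (M : FinMatroid α) (i j : α) (K : Finset α) : Prop :=
  M.r (insert i K) + M.r (insert j K) = M.r (insert i (insert j K)) + M.r K

/-- A matroid is loopless if every singleton of the ground set is independent. -/
def Loopless (M : FinMatroid α) : Prop := ∀ e ∈ M.E, M.r {e} = 1

end FinMatroid

/-- Well-formedness of a CI-statement `(ij|K)` on ground set `E`. -/
def wfCI {α : Type*} [DecidableEq α] (E : Finset α) (i j : α) (K : Finset α) : Prop :=
  i ∈ E ∧ j ∈ E ∧ i ≠ j ∧ i ∉ K ∧ j ∉ K ∧ K ⊆ E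

/-- The CI-structure `[[M]]` of a matroid, as a predicate on CI-statements. -/
def FinMatroid.ciOf {α : Type*} [DecidableEq α] (M : FinMatroid α) :
    α → α → Finset α → Prop :=
  fun i j K => wfCI M.E i j K ∧ M.CI i j K

namespace FinMatroid

variable {α : Type*} [DecidableEq α] (M : FinMatroid α)

lemma r_insert_le {A : Finset α} {x : α} (hA : A ⊆ M.E) (hx : x ∈ M.E) :
    M.r (insert x A) ≤ M.r A + 1 := by
  have hxE : ({x} : Finset α) ⊆ M.E := by simpa using hx
  have h1 : M.r {x} ≤ 1 := by simpa using M.r_le_card hxE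
  have h2 := M.r_submod hA hxE
  rw [Finset.union_comm] at h2
  rw [Finset.insert_eq]
  omega

lemma r_union_le_add_card :
    ∀ (X : Finset α), X ⊆ M.E → ∀ A : Finset α, A ⊆ M.E →
      M.r (A ∪ X) ≤ M.r A + X.card := by
  intro X
  induction X using Finset.induction_on with
  | empty => intro _ A _; simp
  | insert _ _ haX ih =>
    rename_i a X
    intro hXE A hA
    have haE : a ∈ M.E := hXE (Finset.mem_insert_self a X)
    have hXE' : X ⊆ M.E := fun y hy => hXE (Finset.mem_insert_of_mem hy)
    have hAX : A ∪ X ⊆ M.E := Finset.union_subset hA hXE'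
    have h1 : M.r (insert a (A ∪ X)) ≤ M.r (A ∪ X) + 1 := M.r_insert_le hAX haE
    have h2 := ih hXE' A hA
    rw [Finset.union_insert]
    rw [Finset.card_insert_of_notMem haX]
    omega

lemma indep_subset {B C : Finset α} (hB : M.Indep B) (hCB : C ⊆ B) : M.Indep C := by
  obtain ⟨hBE, hBr⟩ := hB
  have hCE : C ⊆ M.E := hCB.trans hBE
  have hle : M.r C ≤ C.card := M.r_le_card hCE
  have hB' : B = C ∪ (B \ C) := by
    rw [Finset.union_sdiff_of_subset hCB]
  have hcard : (B \ C).card = B.card - C.card := Finset.card_sdiff_of_subset hCB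
  have hcc : C.card ≤ B.card := Finset.card_le_card hCB
  have h1 : M.r (C ∪ (B \ C)) ≤ M.r C + (B \ C).card :=
    M.r_union_le_add_card _ ((Finset.sdiff_subset).trans hBE) _ hCE
  rw [← hB'] at h1
  exact ⟨hCE, by omega⟩

lemma exists_circuit {A : Finset α} (hA : A ⊆ M.E) (hdep : M.r A < A.card) :
    ∃ C, M.Circuit C ∧ C ⊆ A := by
  classical
  induction A using Finset.strongInduction with
  | _ A ih =>
  by_cases h : ∀ S, S ⊂ A → M.r S = S.card
  · exact ⟨A, ⟨hA, hdep, h⟩, Finset.Subset.refl A⟩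
  · push_neg at h
    obtain ⟨S, hSA, hS⟩ := h
    have hSE : S ⊆ M.E := hSA.subset.trans hA
    have : M.r S < S.card := lt_of_le_of_ne (M.r_le_card hSE) hS
    obtain ⟨C, hC, hCS⟩ := ih S hSA hSE this
    exact ⟨C, hC, hCS.trans hSA.subset⟩

lemma exists_basis {S : Finset α} (hS : S ⊆ M.E) :
    ∃ B, B ⊆ S ∧ M.Indep B ∧ M.r B = M.r S := by
  classical
  set F := S.powerset.filter (fun B => M.Indep B) with hF
  have hne : F.Nonempty := ⟨∅,
    Finset.mem_filter.mpr ⟨Finset.empty_mem_powerset _, Finset.empty_subset _, by simp [M.r_empty]⟩⟩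
  obtain ⟨B, hBF, hmax⟩ := F.exists_max_image Finset.card hne
  rw [hF, Finset.mem_filter, Finset.mem_powerset] at hBF
  obtain ⟨hBS, hBindep⟩ := hBF
  have hBE : B ⊆ M.E := hBS.trans hS
  refine ⟨B, hBS, hBindep, ?_⟩
  -- adding any element of S keeps rank
  have hstep : ∀ x ∈ S, M.r (insert x B) = M.r B := by
    intro x hxS
    by_cases hxB : x ∈ B
    · rw [Finset.insert_eq_self.mpr hxB]
    · have hxE : x ∈ M.E := hS hxS
      have hsub : insert x B ⊆ S := Finset.insert_subset hxS hBS
      have hsubE : insert x B ⊆ M.E := hsub.trans hS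
      have hle : M.r (insert x B) ≤ (insert x B).card := M.r_le_card hsubE
      have hcard : (insert x B).card = B.card + 1 := Finset.card_insert_of_notMem hxB
      have hne' : M.r (insert x B) ≠ (insert x B).card := by
        intro heq
        have : insert x B ∈ F := by
          rw [hF, Finset.mem_filter, Finset.mem_powerset]
          exact ⟨hsub, hsubE, heq⟩
        have := hmax _ this
        omega
      have hge : M.r B ≤ M.r (insert x B) :=
        M.r_mono (Finset.subset_insert _ _) hsubE
      have := hBindep.2
      omega
  have hspan : ∀ X : Finset α, X ⊆ S → M.r (B ∪ X) = M.r B := by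
    intro X
    induction X using Finset.induction_on with
    | empty => intro _; simp
    | insert _ _ haX ih =>
      rename_i a X
      intro hXS
      have haS : a ∈ S := hXS (Finset.mem_insert_self a X)
      have hXS' : X ⊆ S := fun y hy => hXS (Finset.mem_insert_of_mem hy)
      have hIH := ih hXS'
      have hBXE : B ∪ X ⊆ M.E := Finset.union_subset hBE (hXS'.trans hS)
      have haBE : insert a B ⊆ M.E := Finset.insert_subset (hS haS) hBE
      have hsubmod := M.r_submod hBXE haBE
      have hun : (B ∪ X) ∪ insert a B = insert a (B ∪ X) := by
        ext y; simp [or_comm, or_assoc, or_left_comm]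
      have hintE : (B ∪ X) ∩ insert a B ⊆ M.E := fun y hy =>
        hBXE (Finset.mem_of_mem_inter_left hy)
      have hBint : B ⊆ (B ∪ X) ∩ insert a B :=
        Finset.subset_inter Finset.subset_union_left (Finset.subset_insert _ _)
      have hintge : M.r B ≤ M.r ((B ∪ X) ∩ insert a B) := M.r_mono hBint hintE
      have hstep' : M.r (insert a B) = M.r B := hstep a haS
      rw [hun] at hsubmod
      have hmono : M.r (B ∪ X) ≤ M.r (insert a (B ∪ X)) := by
        have : insert a (B ∪ X) ⊆ M.E := Finset.insert_subset (hS haS) hBXE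
        exact M.r_mono (Finset.subset_insert _ _) this
      rw [Finset.union_insert]
      omega
  have := hspan S (Finset.Subset.refl S)
  rw [Finset.union_eq_right.mpr hBS] at this
  exact this.symm

lemma coloop_insert {S : Finset α} {i : α} (hS : S ⊆ M.E) (hi : i ∈ M.E)
    (hiS : i ∉ S) (h : ∀ C, M.Circuit C → C ⊆ insert i S → i ∉ C) :
    M.r (insert i S) = M.r S + 1 := by
  have hiSE : insert i S ⊆ M.E := Finset.insert_subset hi hS
  have hle : M.r (insert i S) ≤ M.r S + 1 := M.r_insert_le hS hi
  have hge : M.r S ≤ M.r (insert i S) := M.r_mono (Finset.subset_insert _ _) hiSE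
  by_contra hne
  have heq : M.r (insert i S) = M.r S := by omega
  obtain ⟨B, hBS, hBindep, hBr⟩ := M.exists_basis hS
  have hiB : i ∉ B := fun hmem => hiS (hBS hmem)
  have hiBE : insert i B ⊆ M.E := Finset.insert_subset hi (hBS.trans hS)
  have h1 : M.r (insert i B) ≤ M.r (insert i S) :=
    M.r_mono (Finset.insert_subset_insert _ hBS) hiSE
  have hdep : M.r (insert i B) < (insert i B).card := by
    rw [Finset.card_insert_of_notMem hiB]
    have := hBindep.2
    omega
  obtain ⟨C, hCcirc, hCsub⟩ := M.exists_circuit hiBE hdep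
  have hiC : i ∈ C := by
    by_contra hiC
    have hCB : C ⊆ B := fun y hy => by
      rcases Finset.mem_insert.mp (hCsub hy) with h' | h'
      · exact absurd (h' ▸ hy) hiC
      · exact h'
    have := (M.indep_subset hBindep hCB).2
    exact absurd this (Nat.ne_of_lt hCcirc.2.1)
  exact h C hCcirc (hCsub.trans (Finset.insert_subset_insert _ hBS)) hiC

end FinMatroid

/-- if no circuit contained in `{i,j} ∪ K` contains `i` or `j`
(i.e. `i` and `j` are coloops of the restriction to `{i,j} ∪ K`),
then `i ⊥ j | K`. -/
theorem CI_of_no_circuit {α : Type*} [DecidableEq α] (M : FinMatroid α)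
    (i j : α) (K : Finset α)
    (hK : K ⊆ M.E) (hi : i ∈ M.E) (hj : j ∈ M.E) (hij : i ≠ j)
    (hiK : i ∉ K) (hjK : j ∉ K)
    (hC : ∀ C, M.Circuit C → C ⊆ insert i (insert j K) → i ∉ C ∧ j ∉ C) :
    M.CI i j K := by
  have hjKE : insert j K ⊆ M.E := Finset.insert_subset hj hK
  have h1 : M.r (insert i K) = M.r K + 1 := by
    apply M.coloop_insert hK hi hiK
    intro C hc hsub
    exact (hC C hc (hsub.trans (Finset.insert_subset_insert _ (Finset.subset_insert _ _)))).1
  have h2 : M.r (insert i (insert j K)) = M.r (insert j K) + 1 := by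
    apply M.coloop_insert hjKE hi
    · simp [hij, hiK]
    · intro C hc hsub
      exact (hC C hc hsub).1
  unfold FinMatroid.CI
  omega
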